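/- Let G be a finite connected simple graph with n vertices and m edges, W a quaternionic weighted matrix of G, and t a quaternion. Then Sdet(I_{2m} − t·(B_w − J_0)) · |1 − t²|^{2n} = |1 − t²|^{2m} · Sdet(I_n − W·t + (D_w − I_n)·t²), where matrix-times-t denotes entrywise right multiplication by t. (Equivalently, the reciprocal of the quaternionic second weighted zeta function Z_1^ℍ(G,w,t)^{-1} = Sdet(I_{2m} − t(B_w − J_0)) equals |1 − t²|^{2m−2n}·Sdet(I_n − W t + (D_w − I_n)t²).) -/
import Mathlib


open scoped Quaternion

/-- The simplex part of a quaternion `x = a + j·b`: the complex number `a = x₀ + x₁·i`. -/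
noncomputable def qSimplex (x : ℍ[ℝ]) : ℂ := ⟨x.re, x.imI⟩

/-- The perplex part of a quaternion `x = a + j·b`: the complex number `b = x₂ − x₃·i`. -/
noncomputable def qPerplex (x : ℍ[ℝ]) : ℂ := ⟨x.imJ, -x.imK⟩

/-- The simplex part of a quaternionic matrix. -/
noncomputable def matSimplex {α β : Type*} (M : Matrix α β ℍ[ℝ]) : Matrix α β ℂ :=
  Matrix.of fun r s => qSimplex (M r s)

/-- The perplex part of a quaternionic matrix. -/
noncomputable def matPerplex {α β : Type*} (M : Matrix α β ℍ[ℝ]) : Matrix α β ℂ :=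
  Matrix.of fun r s => qPerplex (M r s)

/-- The complex-block representation `ψ(M) = [[Mˢ, −conj(Mᵖ)], [Mᵖ, conj(Mˢ)]]`
of a quaternionic matrix `M = Mˢ + j·Mᵖ`. -/
noncomputable def psi {α β : Type*} (M : Matrix α β ℍ[ℝ]) : Matrix (α ⊕ α) (β ⊕ β) ℂ :=
  Matrix.fromBlocks (matSimplex M) (-(matPerplex M).map (starRingEnd ℂ))
    (matPerplex M) ((matSimplex M).map (starRingEnd ℂ))

/-- The Study determinant of a square quaternionic matrix: `Sdet(M) = det(ψ(M))`. -/
noncomputable def Sdet {α : Type*} [Fintype α] [DecidableEq α] (M : Matrix α α ℍ[ℝ]) : ℂ :=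
  (psi M).det

-- scalar lemmas
lemma qSimplex_zero : qSimplex 0 = 0 := by simp [qSimplex, Complex.ext_iff]
lemma qPerplex_zero : qPerplex 0 = 0 := by simp [qPerplex, Complex.ext_iff]
lemma qSimplex_one : qSimplex 1 = 1 := by simp [qSimplex, Complex.ext_iff]
lemma qPerplex_one : qPerplex 1 = 0 := by simp [qPerplex, Complex.ext_iff]
lemma qSimplex_add (x y : ℍ[ℝ]) : qSimplex (x + y) = qSimplex x + qSimplex y := by
  simp [qSimplex, Complex.ext_iff]
lemma qPerplex_add (x y : ℍ[ℝ]) : qPerplex (x + y) = qPerplex x + qPerplex y := by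
  simp [qPerplex, Complex.ext_iff]; ring
lemma qSimplex_sub (x y : ℍ[ℝ]) : qSimplex (x - y) = qSimplex x - qSimplex y := by
  simp [qSimplex, Complex.ext_iff]
lemma qPerplex_sub (x y : ℍ[ℝ]) : qPerplex (x - y) = qPerplex x - qPerplex y := by
  simp [qPerplex, Complex.ext_iff]; ring
lemma qSimplex_mul (x y : ℍ[ℝ]) :
    qSimplex (x * y) = qSimplex x * qSimplex y - (starRingEnd ℂ) (qPerplex x) * qPerplex y := by
  simp [qSimplex, qPerplex, Complex.ext_iff, Quaternion.re_mul, Quaternion.imI_mul,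
    Complex.mul_re, Complex.mul_im]
  constructor <;> ring
lemma qPerplex_mul (x y : ℍ[ℝ]) :
    qPerplex (x * y) = (starRingEnd ℂ) (qSimplex x) * qPerplex y + qPerplex x * qSimplex y := by
  simp [qSimplex, qPerplex, Complex.ext_iff, Quaternion.imJ_mul, Quaternion.imK_mul,
    Complex.mul_re, Complex.mul_im]
  constructor <;> ring

noncomputable def qSHom : ℍ[ℝ] →+ ℂ := ⟨⟨qSimplex, qSimplex_zero⟩, qSimplex_add⟩
noncomputable def qPHom : ℍ[ℝ] →+ ℂ := ⟨⟨qPerplex, qPerplex_zero⟩, qPerplex_add⟩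

-- matrix lemmas
lemma matSimplex_apply {α β : Type*} (M : Matrix α β ℍ[ℝ]) (r : α) (s : β) :
    matSimplex M r s = qSimplex (M r s) := rfl
lemma matPerplex_apply {α β : Type*} (M : Matrix α β ℍ[ℝ]) (r : α) (s : β) :
    matPerplex M r s = qPerplex (M r s) := rfl

lemma matSimplex_one {α : Type*} [DecidableEq α] :
    matSimplex (1 : Matrix α α ℍ[ℝ]) = 1 := by
  ext i j
  simp [matSimplex, Matrix.one_apply, apply_ite qSimplex, qSimplex_one, qSimplex_zero]

lemma matPerplex_one {α : Type*} [DecidableEq α] :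
    matPerplex (1 : Matrix α α ℍ[ℝ]) = 0 := by
  ext i j
  simp [matPerplex, Matrix.one_apply, apply_ite qPerplex, qPerplex_one, qPerplex_zero]

lemma matSimplex_sub {α β : Type*} (M N : Matrix α β ℍ[ℝ]) :
    matSimplex (M - N) = matSimplex M - matSimplex N := by
  ext i j; simp [matSimplex, qSimplex_sub]
lemma matPerplex_sub {α β : Type*} (M N : Matrix α β ℍ[ℝ]) :
    matPerplex (M - N) = matPerplex M - matPerplex N := by
  ext i j; simp [matPerplex, qPerplex_sub]

lemma matSimplex_mul {α β γ : Type*} [Fintype β] (M : Matrix α β ℍ[ℝ]) (N : Matrix β γ ℍ[ℝ]) :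
    matSimplex (M * N)
      = matSimplex M * matSimplex N - (matPerplex M).map (starRingEnd ℂ) * matPerplex N := by
  ext i j
  simp only [matSimplex, matPerplex, Matrix.of_apply, Matrix.mul_apply, Matrix.sub_apply,
    Matrix.map_apply]
  rw [show (qSimplex (∑ k, M i k * N k j)) = qSHom (∑ k, M i k * N k j) from rfl, map_sum,
    ← Finset.sum_sub_distrib]
  exact Finset.sum_congr rfl fun k _ => qSimplex_mul _ _

lemma matPerplex_mul {α β γ : Type*} [Fintype β] (M : Matrix α β ℍ[ℝ]) (N : Matrix β γ ℍ[ℝ]) :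
    matPerplex (M * N)
      = (matSimplex M).map (starRingEnd ℂ) * matPerplex N + matPerplex M * matSimplex N := by
  ext i j
  simp only [matSimplex, matPerplex, Matrix.of_apply, Matrix.mul_apply, Matrix.add_apply,
    Matrix.map_apply]
  rw [show (qPerplex (∑ k, M i k * N k j)) = qPHom (∑ k, M i k * N k j) from rfl, map_sum,
    ← Finset.sum_add_distrib]
  exact Finset.sum_congr rfl fun k _ => qPerplex_mul _ _

lemma map_conj_add {α β : Type*} (M N : Matrix α β ℂ) :
    (M + N).map (starRingEnd ℂ) = M.map (starRingEnd ℂ) + N.map (starRingEnd ℂ) := by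
  ext i j; simp

lemma map_conj_neg {α β : Type*} (M : Matrix α β ℂ) :
    (-M).map (starRingEnd ℂ) = -(M.map (starRingEnd ℂ)) := by
  ext i j; simp

lemma map_conj_conj {α β : Type*} (M : Matrix α β ℂ) :
    (M.map (starRingEnd ℂ)).map (starRingEnd ℂ) = M := by
  ext i j; simp

lemma psi_one {α : Type*} [DecidableEq α] : psi (1 : Matrix α α ℍ[ℝ]) = 1 := by
  rw [psi, matSimplex_one, matPerplex_one]
  simp [Matrix.fromBlocks_one]

lemma psi_sub {α β : Type*} (M N : Matrix α β ℍ[ℝ]) : psi (M - N) = psi M - psi N := by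
  ext (i|i) (j|j) <;>
    simp [psi, Matrix.fromBlocks, matSimplex_sub, matPerplex_sub, Matrix.sub_apply, map_sub] <;>
    ring

lemma psi_mul {α β γ : Type*} [Fintype β] (M : Matrix α β ℍ[ℝ]) (N : Matrix β γ ℍ[ℝ]) :
    psi (M * N) = psi M * psi N := by
  rw [psi, psi, psi, Matrix.fromBlocks_multiply, matSimplex_mul, matPerplex_mul]
  simp only [map_conj_add, map_conj_neg, Matrix.map_mul, map_conj_conj, Matrix.mul_neg, Matrix.neg_mul,
    neg_add, Matrix.map_sub, sub_eq_add_neg]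
  exact Matrix.fromBlocks_inj.mpr ⟨by abel, by abel, by abel, by abel⟩

lemma Sdet_mul {α : Type*} [Fintype α] [DecidableEq α] (M N : Matrix α α ℍ[ℝ]) :
    Sdet (M * N) = Sdet M * Sdet N := by
  rw [Sdet, Sdet, Sdet, psi_mul, Matrix.det_mul]

lemma psi_submatrix {α β α' β' : Type*} (M : Matrix α β ℍ[ℝ]) (f : α' → α) (g : β' → β) :
    psi (M.submatrix f g) = (psi M).submatrix (Sum.map f f) (Sum.map g g) := by
  ext (i|i) (j|j) <;> rfl

lemma Sdet_reindex {α β : Type*} [Fintype α] [DecidableEq α] [Fintype β] [DecidableEq β]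
    (e : α ≃ β) (M : Matrix α α ℍ[ℝ]) : Sdet (Matrix.reindex e e M) = Sdet M := by
  rw [Sdet, Matrix.reindex_apply, psi_submatrix]
  have : (Sum.map ⇑e.symm ⇑e.symm) = ⇑(e.sumCongr e).symm := by
    ext x; cases x <;> rfl
  rw [this, ← Matrix.reindex_apply, Matrix.det_reindex_self, Sdet]

-- determinant of scalar-block 2x2 matrices
open Kronecker in
lemma det_scalar_blocks {α : Type*} [Fintype α] [DecidableEq α] (a b c d : ℂ) :
    (Matrix.fromBlocks (a • (1 : Matrix α α ℂ)) (b • (1 : Matrix α α ℂ))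
      (c • (1 : Matrix α α ℂ)) (d • (1 : Matrix α α ℂ))).det
      = (a * d - b * c) ^ Fintype.card α := by
  classical
  let e : α ⊕ α ≃ Fin 2 × α :=
    { toFun := Sum.elim (fun x => (0, x)) (fun x => (1, x))
      invFun := fun p => if p.1 = 0 then Sum.inl p.2 else Sum.inr p.2
      left_inv := by rintro (x | x) <;> simp
      right_inv := by rintro ⟨i, x⟩; fin_cases i <;> simp }
  have hM : Matrix.fromBlocks (a • (1 : Matrix α α ℂ)) (b • 1) (c • 1) (d • 1)
      = ((!![a, b; c, d]) ⊗ₖ (1 : Matrix α α ℂ)).submatrix e e := by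
    ext (x | x) (y | y) <;>
      simp [e, Matrix.fromBlocks, Matrix.one_apply, Matrix.submatrix_apply,
        Matrix.kroneckerMap_apply, mul_ite, mul_one, mul_zero]
  rw [hM, Matrix.det_submatrix_equiv_self, Matrix.det_kronecker, Matrix.det_one,
    Matrix.det_fin_two_of]
  simp

lemma psi_smul_one {α : Type*} [DecidableEq α] (q : ℍ[ℝ]) :
    psi (q • (1 : Matrix α α ℍ[ℝ]))
      = Matrix.fromBlocks (qSimplex q • (1 : Matrix α α ℂ))
          ((-(starRingEnd ℂ) (qPerplex q)) • (1 : Matrix α α ℂ))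
          (qPerplex q • (1 : Matrix α α ℂ))
          ((starRingEnd ℂ) (qSimplex q) • (1 : Matrix α α ℂ)) := by
  have hS : matSimplex (q • (1 : Matrix α α ℍ[ℝ])) = qSimplex q • (1 : Matrix α α ℂ) := by
    ext i j
    by_cases h : i = j <;>
      simp [matSimplex, Matrix.one_apply, h, qSimplex_zero]
  have hP : matPerplex (q • (1 : Matrix α α ℍ[ℝ])) = qPerplex q • (1 : Matrix α α ℂ) := by
    ext i j
    by_cases h : i = j <;>
      simp [matPerplex, Matrix.one_apply, h, qPerplex_zero]
  have hmap : ∀ z : ℂ, (z • (1 : Matrix α α ℂ)).map (starRingEnd ℂ)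
      = (starRingEnd ℂ) z • (1 : Matrix α α ℂ) := by
    intro z; ext i j; by_cases h : i = j <;> simp [Matrix.one_apply, h]
  rw [psi, hS, hP, hmap, hmap, ← neg_smul]

lemma Sdet_smul_one {α : Type*} [Fintype α] [DecidableEq α] (q : ℍ[ℝ]) :
    Sdet (q • (1 : Matrix α α ℍ[ℝ])) = ((‖q‖ ^ (2 * Fintype.card α) : ℝ) : ℂ) := by
  rw [Sdet, psi_smul_one, det_scalar_blocks]
  have h1 : Complex.normSq (qSimplex q) + Complex.normSq (qPerplex q) = ‖q‖ ^ 2 := by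
    have h2 : ‖q‖ ^ 2 = Quaternion.normSq q := by
      rw [pow_two, ← Quaternion.normSq_eq_norm_mul_self]
    rw [h2, Quaternion.normSq_def']
    simp [Complex.normSq, qSimplex, qPerplex]
    ring
  have this1 : qSimplex q * (starRingEnd ℂ) (qSimplex q)
      - (-(starRingEnd ℂ) (qPerplex q)) * qPerplex q
      = ((‖q‖ ^ 2 : ℝ) : ℂ) := by
    rw [Complex.mul_conj, neg_mul, sub_neg_eq_add,
      mul_comm ((starRingEnd ℂ) (qPerplex q)) (qPerplex q), Complex.mul_conj,
      ← Complex.ofReal_add, h1]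
  rw [this1, ← Complex.ofReal_pow, ← pow_mul]

lemma psi_fromBlocks {α β : Type*} (A : Matrix α α ℍ[ℝ]) (B : Matrix α β ℍ[ℝ])
    (C : Matrix β α ℍ[ℝ]) (D : Matrix β β ℍ[ℝ]) :
    psi (Matrix.fromBlocks A B C D)
      = (Matrix.fromBlocks (psi A) (psi B) (psi C) (psi D)).submatrix
          (Equiv.sumSumSumComm α β α β) (Equiv.sumSumSumComm α β α β) := by
  ext ((i|i)|(i|i)) ((j|j)|(j|j)) <;> rfl

lemma Sdet_fromBlocks {α β : Type*} [Fintype α] [DecidableEq α] [Fintype β] [DecidableEq β]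
    (A : Matrix α α ℍ[ℝ]) (B : Matrix α β ℍ[ℝ]) (C : Matrix β α ℍ[ℝ]) (D : Matrix β β ℍ[ℝ]) :
    Sdet (Matrix.fromBlocks A B C D)
      = (Matrix.fromBlocks (psi A) (psi B) (psi C) (psi D)).det := by
  rw [Sdet, psi_fromBlocks, Matrix.det_submatrix_equiv_self]

lemma psi_zero {α β : Type*} : psi (0 : Matrix α β ℍ[ℝ]) = 0 := by
  ext (i|i) (j|j) <;>
    simp [psi, Matrix.fromBlocks, matSimplex, matPerplex, qSimplex_zero, qPerplex_zero]

lemma Sdet_fromBlocks_zero21 {α β : Type*} [Fintype α] [DecidableEq α] [Fintype β] [DecidableEq β]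
    (A : Matrix α α ℍ[ℝ]) (B : Matrix α β ℍ[ℝ]) (D : Matrix β β ℍ[ℝ]) :
    Sdet (Matrix.fromBlocks A B 0 D) = Sdet A * Sdet D := by
  rw [Sdet_fromBlocks, psi_zero, Matrix.det_fromBlocks_zero₂₁, Sdet, Sdet]

lemma Sdet_fromBlocks_zero12 {α β : Type*} [Fintype α] [DecidableEq α] [Fintype β] [DecidableEq β]
    (A : Matrix α α ℍ[ℝ]) (C : Matrix β α ℍ[ℝ]) (D : Matrix β β ℍ[ℝ]) :
    Sdet (Matrix.fromBlocks A 0 C D) = Sdet A * Sdet D := by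
  rw [Sdet_fromBlocks, psi_zero, Matrix.det_fromBlocks_zero₁₂, Sdet, Sdet]

lemma Sdet_one {α : Type*} [Fintype α] [DecidableEq α] : Sdet (1 : Matrix α α ℍ[ℝ]) = 1 := by
  rw [Sdet, psi_one, Matrix.det_one]

lemma mat_mul_smul {n₁ n₂ n₃ : Type*} [Fintype n₂] (q : ℍ[ℝ]) (A : Matrix n₁ n₂ ℍ[ℝ])
    (B : Matrix n₂ n₃ ℍ[ℝ]) (h : ∀ i j, Commute q (A i j)) :
    A * (q • B) = q • (A * B) := by
  refine Matrix.ext fun i k => ?_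
  simp only [Matrix.mul_apply, Matrix.smul_apply, smul_eq_mul, Finset.mul_sum]
  exact Finset.sum_congr rfl fun j _ => by rw [← mul_assoc, ← (h i j).eq, mul_assoc]

lemma Sdet_one_t_one {α : Type*} [Fintype α] [DecidableEq α] (t : ℍ[ℝ]) :
    Sdet (Matrix.fromBlocks (1 : Matrix α α ℍ[ℝ]) (t • (1 : Matrix α α ℍ[ℝ]))
        (t • (1 : Matrix α α ℍ[ℝ])) (1 : Matrix α α ℍ[ℝ]))
      = ((‖1 - t ^ 2‖ ^ (2 * Fintype.card α) : ℝ) : ℂ) := by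
  have hBR : (t • (1 : Matrix α α ℍ[ℝ])) * (t • 1) + 1 * ((1 - t ^ 2) • 1) = 1 := by
    rw [Matrix.smul_mul, Matrix.one_mul, smul_smul, Matrix.one_mul, ← add_smul]
    have : t * t + (1 - t ^ 2) = 1 := by noncomm_ring
    rw [this, one_smul]
  have hfact : Matrix.fromBlocks (1 : Matrix α α ℍ[ℝ]) (0 : Matrix α α ℍ[ℝ])
        (t • (1 : Matrix α α ℍ[ℝ])) (1 : Matrix α α ℍ[ℝ])
        * Matrix.fromBlocks (1 : Matrix α α ℍ[ℝ]) (t • (1 : Matrix α α ℍ[ℝ]))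
          (0 : Matrix α α ℍ[ℝ]) ((1 - t ^ 2) • (1 : Matrix α α ℍ[ℝ]))
      = Matrix.fromBlocks (1 : Matrix α α ℍ[ℝ]) (t • (1 : Matrix α α ℍ[ℝ]))
          (t • (1 : Matrix α α ℍ[ℝ])) (1 : Matrix α α ℍ[ℝ]) := by
    rw [Matrix.fromBlocks_multiply]
    exact Matrix.fromBlocks_inj.mpr ⟨by simp, by simp, by simp, hBR⟩
  rw [← hfact, Sdet_mul, Sdet_fromBlocks_zero12, Sdet_fromBlocks_zero21, Sdet_one,
    Sdet_smul_one]
  simp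

variable {V : Type*} [Fintype V] [DecidableEq V]

/-- The weighted matrix `B_w` on arcs (darts): `(B_w)_{ef} = w(f)` if `t(e) = o(f)`, else `0`. -/
noncomputable def arcWeightMat (G : SimpleGraph V) [DecidableRel G.Adj]
    (W : Matrix V V ℍ[ℝ]) : Matrix G.Dart G.Dart ℍ[ℝ] :=
  Matrix.of fun e f => if e.snd = f.fst then W f.fst f.snd else 0

/-- The arc-reversal matrix `J₀`: `(J₀)_{ef} = 1` if `f = e⁻¹`, else `0`. -/
noncomputable def arcRevMat (G : SimpleGraph V) [DecidableRel G.Adj] :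
    Matrix G.Dart G.Dart ℍ[ℝ] :=
  Matrix.of fun e f => if f = e.symm then 1 else 0

/-- The diagonal matrix `D_w` with `(D_w)_{uu} = Σ_{e : o(e) = u} w(e)`. -/
noncomputable def degWeightMat (G : SimpleGraph V) [DecidableRel G.Adj]
    (W : Matrix V V ℍ[ℝ]) : Matrix V V ℍ[ℝ] :=
  Matrix.diagonal fun u => ∑ e : G.Dart, if e.fst = u then W e.fst e.snd else 0

lemma Sdet_Q (G : SimpleGraph V) [DecidableRel G.Adj] (t : ℍ[ℝ]) :
    Sdet (1 + t • arcRevMat G) = ((‖1 - t ^ 2‖ ^ (Fintype.card G.Dart) : ℝ) : ℂ) := by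
  classical
  obtain ⟨f, hfinj⟩ : ∃ f : V → ℕ, Function.Injective f :=
    ⟨fun v => ((Fintype.equivFin V) v : ℕ),
      fun u v h => (Fintype.equivFin V).injective (Fin.val_injective h)⟩
  set P : G.Dart → Prop := fun d => f d.fst < f d.snd with hP
  have hsymmP : ∀ d : G.Dart, ¬ P d → P d.symm := by
    intro d hd
    have hne : f d.fst ≠ f d.snd := fun h => d.fst_ne_snd (hfinj h)
    have : f d.snd < f d.fst := lt_of_le_of_ne (not_lt.mp hd) (Ne.symm hne)
    simpa [hP] using this
  have hPsymm : ∀ d : G.Dart, P d → ¬ P d.symm := by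
    intro d hd hd'
    exact lt_asymm hd (by simpa [hP] using hd')
  have hsymm_inj : ∀ d d' : G.Dart, d.symm = d'.symm → d = d' := by
    intro d d' h
    have := congrArg SimpleGraph.Dart.symm h
    simpa [SimpleGraph.Dart.symm_symm] using this
  let e : G.Dart ≃ {d : G.Dart // P d} ⊕ {d : G.Dart // P d} :=
    { toFun := fun d => if h : P d then Sum.inl ⟨d, h⟩ else Sum.inr ⟨d.symm, hsymmP d h⟩
      invFun := Sum.elim (fun d => d.1) (fun d => d.1.symm)
      left_inv := by
        intro d
        dsimp only
        by_cases h : P d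
        · rw [dif_pos h]; rfl
        · rw [dif_neg h]; exact d.symm_symm
      right_inv := by
        rintro (⟨d, hd⟩ | ⟨d, hd⟩) <;> dsimp only [Sum.elim_inl, Sum.elim_inr]
        · rw [dif_pos hd]
        · rw [dif_neg (hPsymm d hd)]
          exact congrArg Sum.inr (Subtype.ext d.symm_symm) }
  have hcard : Fintype.card G.Dart = 2 * Fintype.card {d : G.Dart // P d} := by
    rw [Fintype.card_congr e, Fintype.card_sum, two_mul]
  have hre : (Matrix.reindex e e) (1 + t • arcRevMat G)
      = Matrix.fromBlocks (1 : Matrix {d : G.Dart // P d} {d : G.Dart // P d} ℍ[ℝ])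
          (t • (1 : Matrix {d : G.Dart // P d} {d : G.Dart // P d} ℍ[ℝ]))
          (t • (1 : Matrix {d : G.Dart // P d} {d : G.Dart // P d} ℍ[ℝ]))
          (1 : Matrix {d : G.Dart // P d} {d : G.Dart // P d} ℍ[ℝ]) := by
    refine Matrix.ext ?_
    rintro (⟨d, hd⟩ | ⟨d, hd⟩) (⟨d', hd'⟩ | ⟨d', hd'⟩) <;>
      simp only [Matrix.reindex_apply, Matrix.submatrix_apply, e, Equiv.coe_fn_symm_mk,
        Sum.elim_inl, Sum.elim_inr, Matrix.add_apply, Matrix.smul_apply, Matrix.one_apply,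
        arcRevMat, Matrix.of_apply, Matrix.fromBlocks_apply₁₁, Matrix.fromBlocks_apply₁₂,
        Matrix.fromBlocks_apply₂₁, Matrix.fromBlocks_apply₂₂, smul_eq_mul, Subtype.mk.injEq]
    · -- inl inl
      have h2 : d' ≠ d.symm := fun h => hPsymm d hd (h ▸ hd')
      rw [if_neg h2, mul_zero, add_zero]
    · -- inl inr
      have h1 : d ≠ d'.symm := fun h => hPsymm d' hd' (h ▸ hd)
      have h2 : (d'.symm = d.symm) ↔ (d = d') :=
        ⟨fun h => (hsymm_inj _ _ h).symm, fun h => h ▸ rfl⟩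
      rw [if_neg h1, zero_add, if_congr h2.symm rfl rfl, eq_comm]
    · -- inr inl
      have h1 : d.symm ≠ d' := fun h => hPsymm d hd (h ▸ hd')
      have h2 : (d' = d.symm.symm) ↔ (d = d') := by
        rw [SimpleGraph.Dart.symm_symm]; exact eq_comm
      rw [if_neg h1, zero_add, if_congr h2 rfl rfl]
    · -- inr inr
      have h1 : (d.symm = d'.symm) ↔ (d = d') := ⟨hsymm_inj d d', fun h => h ▸ rfl⟩
      have h2 : d'.symm ≠ d.symm.symm := by
        rw [SimpleGraph.Dart.symm_symm]
        exact fun h => hPsymm d' hd' (h ▸ hd)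
      rw [if_neg h2, mul_zero, add_zero, if_congr h1 rfl rfl]
  have hS := Sdet_reindex e (1 + t • arcRevMat G)
  rw [← hS, hre, Sdet_one_t_one, hcard]

section GraphMats
variable (G : SimpleGraph V) [DecidableRel G.Adj]

noncomputable def tailMat : Matrix G.Dart V ℍ[ℝ] :=
  Matrix.of fun e u => if e.snd = u then 1 else 0
noncomputable def headMat : Matrix G.Dart V ℍ[ℝ] :=
  Matrix.of fun e u => if e.fst = u then 1 else 0
noncomputable def wtMat (W : Matrix V V ℍ[ℝ]) : Matrix V G.Dart ℍ[ℝ] :=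
  Matrix.of fun u f => if f.fst = u then W f.fst f.snd else 0

lemma tailMat_mul_smul_one (q : ℍ[ℝ]) :
    tailMat G * (q • (1 : Matrix V V ℍ[ℝ])) = q • tailMat G := by
  refine Matrix.ext fun e u => ?_
  simp [tailMat, Matrix.mul_apply, Matrix.one_apply, mul_ite, ite_mul, Finset.sum_ite_eq',
    Finset.sum_ite_eq]

lemma headMat_mul_smul_one (q : ℍ[ℝ]) :
    headMat G * (q • (1 : Matrix V V ℍ[ℝ])) = q • headMat G := by
  refine Matrix.ext fun e u => ?_
  simp [headMat, Matrix.mul_apply, Matrix.one_apply, mul_ite, ite_mul, Finset.sum_ite_eq',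
    Finset.sum_ite_eq]

lemma mul_smul_one_apply (A : Matrix V V ℍ[ℝ]) (q : ℍ[ℝ]) (u v : V) :
    (A * (q • (1 : Matrix V V ℍ[ℝ]))) u v = A u v * q := by
  simp [Matrix.mul_apply, Matrix.one_apply, mul_ite, ite_mul, Finset.sum_ite_eq',
    Finset.sum_ite_eq]

lemma arcRev_entry_commute (q : ℍ[ℝ]) :
    ∀ e f : G.Dart, Commute q (arcRevMat G e f) := by
  intro e f
  simp only [arcRevMat, Matrix.of_apply]
  split_ifs
  · exact Commute.one_right q
  · exact Commute.zero_right q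

lemma arcRev_mul_smul {κ : Type*} (q : ℍ[ℝ]) (M : Matrix G.Dart κ ℍ[ℝ]) :
    arcRevMat G * (q • M) = q • (arcRevMat G * M) :=
  mat_mul_smul q _ M (fun e f => (arcRev_entry_commute G q e f))

lemma arcRev_mul_arcRev : arcRevMat G * arcRevMat G = 1 := by
  refine Matrix.ext fun e f => ?_
  rw [Matrix.mul_apply]
  simp only [arcRevMat, Matrix.of_apply, ite_mul, one_mul, zero_mul]
  rw [Finset.sum_ite_eq' Finset.univ e.symm (fun g => if f = g.symm then (1:ℍ[ℝ]) else 0)]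
  simp [Matrix.one_apply, SimpleGraph.Dart.symm_symm, eq_comm]

lemma arcRev_mul_tailMat : arcRevMat G * tailMat G = headMat G := by
  refine Matrix.ext fun e u => ?_
  rw [Matrix.mul_apply]
  simp only [arcRevMat, tailMat, headMat, Matrix.of_apply, ite_mul, one_mul, zero_mul]
  rw [Finset.sum_ite_eq' Finset.univ e.symm (fun g => if g.snd = u then (1:ℍ[ℝ]) else 0)]
  simp

lemma smul_tailMat_mul_wtMat (W : Matrix V V ℍ[ℝ]) (t : ℍ[ℝ]) :
    (t • tailMat G) * wtMat G W = t • arcWeightMat G W := by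
  refine Matrix.ext fun e f => ?_
  rw [Matrix.mul_apply]
  simp only [tailMat, wtMat, Matrix.smul_apply, Matrix.of_apply, smul_eq_mul, mul_ite,
    mul_one, mul_zero, ite_mul, zero_mul]
  rw [Finset.sum_ite_eq Finset.univ f.fst
    (fun x => if e.snd = x then t * W f.fst f.snd else 0)]
  simp only [Finset.mem_univ, if_true, arcWeightMat, Matrix.of_apply, mul_ite, mul_zero]

lemma wtMat_mul_tailMat (W : Matrix V V ℍ[ℝ]) (hW : ∀ u v, ¬ G.Adj u v → W u v = 0) :
    wtMat G W * tailMat G = W := by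
  refine Matrix.ext fun u v => ?_
  rw [Matrix.mul_apply]
  by_cases hA : G.Adj u v
  · rw [Finset.sum_eq_single_of_mem (⟨(u, v), hA⟩ : G.Dart) (Finset.mem_univ _) ?side]
    · simp [wtMat, tailMat]
    case side =>
      intro e _ hne
      simp only [wtMat, tailMat, Matrix.of_apply]
      by_cases h1 : e.fst = u
      · by_cases h2 : e.snd = v
        · exact absurd (SimpleGraph.Dart.ext _ _ (Prod.ext_iff.mpr ⟨h1, h2⟩)) hne
        · rw [if_neg h2, mul_zero]
      · rw [if_neg h1, zero_mul]
  · rw [hW u v hA]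
    apply Finset.sum_eq_zero
    intro e _
    simp only [wtMat, tailMat, Matrix.of_apply]
    by_cases h1 : e.fst = u
    · by_cases h2 : e.snd = v
      · exact absurd (by rw [← h1, ← h2]; exact e.adj) hA
      · rw [if_neg h2, mul_zero]
    · rw [if_neg h1, zero_mul]

lemma wtMat_mul_headMat (W : Matrix V V ℍ[ℝ]) :
    wtMat G W * headMat G = degWeightMat G W := by
  refine Matrix.ext fun u v => ?_
  rw [Matrix.mul_apply]
  by_cases huv : u = v
  · subst huv
    rw [degWeightMat, Matrix.diagonal_apply_eq]
    apply Finset.sum_congr rfl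
    intro e _
    simp only [wtMat, headMat, Matrix.of_apply]
    by_cases h1 : e.fst = u
    · simp [h1]
    · simp [h1]
  · rw [degWeightMat, Matrix.diagonal_apply_ne _ huv]
    apply Finset.sum_eq_zero
    intro e _
    simp only [wtMat, headMat, Matrix.of_apply]
    by_cases h1 : e.fst = u
    · by_cases h2 : e.fst = v
      · exact absurd (h1.symm.trans h2) huv
      · rw [if_neg h2, mul_zero]
    · rw [if_neg h1, zero_mul]

end GraphMats

set_option maxHeartbeats 1000000 in
theorem quaternionic_second_weighted_zeta_bass (G : SimpleGraph V) [DecidableRel G.Adj]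
    (hG : G.Connected) (W : Matrix V V ℍ[ℝ]) (hW : ∀ u v, ¬ G.Adj u v → W u v = 0)
    (t : ℍ[ℝ]) :
    Sdet (1 - t • (arcWeightMat G W - arcRevMat G)) *
        ((‖1 - t ^ 2‖ ^ (2 * Fintype.card V) : ℝ) : ℂ) =
      ((‖1 - t ^ 2‖ ^ (2 * G.edgeFinset.card) : ℝ) : ℂ) *
        Sdet (1 - (Matrix.of fun u v => W u v * t) +
          (Matrix.of fun u v => (degWeightMat G W - 1) u v * t ^ 2)) := by
  classical
  set R : Matrix V V ℍ[ℝ] := 1 - (Matrix.of fun u v => W u v * t) +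
      (Matrix.of fun u v => (degWeightMat G W - 1) u v * t ^ 2) with hRdef
  set c : ℍ[ℝ] := 1 - t ^ 2 with hcdef
  haveI : Nonempty V := hG.nonempty
  have h2n : 2 * Fintype.card V ≠ 0 :=
    Nat.mul_ne_zero two_ne_zero (Nat.pos_iff_ne_zero.mp Fintype.card_pos)
  by_cases hc : c = 0
  · -- degenerate case
    have hnormc : ‖c‖ = 0 := by rw [hc, norm_zero]
    rw [hnormc, zero_pow h2n, Complex.ofReal_zero, mul_zero]
    by_cases hm : G.edgeFinset.card = 0
    · have hnoadj : ∀ u v, ¬ G.Adj u v := by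
        intro u v huv
        have hmem : s(u, v) ∈ G.edgeFinset := by
          rw [SimpleGraph.mem_edgeFinset]; exact huv
        rw [Finset.card_eq_zero.mp hm] at hmem
        exact absurd hmem (Finset.notMem_empty _)
      haveI : IsEmpty G.Dart := ⟨fun d => hnoadj _ _ d.adj⟩
      have hWz : ∀ u v, W u v = 0 := fun u v => hW u v (hnoadj u v)
      have hDz : ∀ u v, degWeightMat G W u v = 0 := by
        intro u v
        simp [degWeightMat, Matrix.diagonal_apply]
      have hR : R = c • (1 : Matrix V V ℍ[ℝ]) := by
        refine Matrix.ext fun u v => ?_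
        rw [hRdef, Matrix.add_apply, Matrix.sub_apply, Matrix.of_apply, Matrix.of_apply,
          Matrix.sub_apply, hWz, hDz, Matrix.smul_apply, smul_eq_mul]
        by_cases h : u = v
        · subst h
          rw [Matrix.one_apply_eq, hcdef]
          noncomm_ring
        · rw [Matrix.one_apply_ne h]
          noncomm_ring
      rw [hm, hR, Sdet_smul_one, hnormc, zero_pow h2n]
      simp
    · rw [zero_pow (Nat.mul_ne_zero two_ne_zero hm)]
      simp
  · -- main case
    have hct : Commute t c := (Commute.one_right t).sub_right ((Commute.refl t).pow_right 2)
    have hcit : Commute c⁻¹ t := (hct.inv_right₀).symm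
    have hQcomm : ∀ e f : G.Dart, Commute c⁻¹ ((1 + t • arcRevMat G) e f) := by
      intro e f
      rw [Matrix.add_apply, Matrix.smul_apply, smul_eq_mul]
      refine Commute.add_right ?_ (Commute.mul_right hcit (arcRev_entry_commute G c⁻¹ e f))
      rw [Matrix.one_apply]
      split_ifs
      · exact Commute.one_right _
      · exact Commute.zero_right _
    have hsq : (t • arcRevMat G) * (t • arcRevMat G)
        = (t * t) • (1 : Matrix G.Dart G.Dart ℍ[ℝ]) := by
      rw [Matrix.smul_mul, arcRev_mul_smul, arcRev_mul_arcRev, smul_smul]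
    have hc1 : c • (1 : Matrix G.Dart G.Dart ℍ[ℝ]) = 1 - (t * t) • 1 := by
      rw [hcdef, sub_smul, one_smul, pow_two]
    have hQQ' : (1 + t • arcRevMat G) * (1 - t • arcRevMat G)
        = c • (1 : Matrix G.Dart G.Dart ℍ[ℝ]) := by
      rw [hc1, ← hsq]
      noncomm_ring
    have hQinv : (1 + t • arcRevMat G) * (c⁻¹ • (1 - t • arcRevMat G)) = 1 := by
      rw [mat_mul_smul c⁻¹ _ _ hQcomm, hQQ', smul_smul, inv_mul_cancel₀ hc, one_smul]
    have hF1 : 1 - t • (arcWeightMat G W - arcRevMat G)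
        = (1 + t • arcRevMat G) *
          (1 - (c⁻¹ • (1 - t • arcRevMat G) * (t • tailMat G)) * wtMat G W) := by
      have h3 : (1 + t • arcRevMat G) *
          ((c⁻¹ • (1 - t • arcRevMat G) * (t • tailMat G)) * wtMat G W)
          = t • arcWeightMat G W := by
        rw [← Matrix.mul_assoc (1 + t • arcRevMat G)
            (c⁻¹ • (1 - t • arcRevMat G) * (t • tailMat G)) (wtMat G W),
          ← Matrix.mul_assoc (1 + t • arcRevMat G) (c⁻¹ • (1 - t • arcRevMat G))
            (t • tailMat G), hQinv, Matrix.one_mul, smul_tailMat_mul_wtMat]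
      rw [Matrix.mul_sub, Matrix.mul_one, h3, smul_sub]
      abel
    have hQ'T : (1 - t • arcRevMat G) * (t • tailMat G)
        = t • tailMat G - (t * t) • headMat G := by
      rw [Matrix.sub_mul, Matrix.one_mul, Matrix.smul_mul, arcRev_mul_smul,
        arcRev_mul_tailMat, smul_smul]
    have hSLX : wtMat G W * (c⁻¹ • (1 - t • arcRevMat G) * (t • tailMat G))
        = W * ((c⁻¹ * t) • (1 : Matrix V V ℍ[ℝ]))
          - degWeightMat G W * ((c⁻¹ * (t * t)) • (1 : Matrix V V ℍ[ℝ])) := by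
      rw [Matrix.smul_mul, hQ'T, smul_sub, smul_smul, smul_smul, Matrix.mul_sub,
        ← tailMat_mul_smul_one, ← headMat_mul_smul_one,
        ← Matrix.mul_assoc (wtMat G W) (tailMat G) ((c⁻¹ * t) • (1 : Matrix V V ℍ[ℝ])),
        ← Matrix.mul_assoc (wtMat G W) (headMat G)
          ((c⁻¹ * (t * t)) • (1 : Matrix V V ℍ[ℝ])),
        wtMat_mul_tailMat G W hW, wtMat_mul_headMat]
    have e1 : (c⁻¹ * t) * c = t := by
      rw [mul_assoc, hct.eq, ← mul_assoc, inv_mul_cancel₀ hc, one_mul]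
    have e2 : (c⁻¹ * (t * t)) * c = t * t := by
      have h := (hct.mul_left hct).eq
      rw [mul_assoc, h, ← mul_assoc, inv_mul_cancel₀ hc, one_mul]
    have hF2 : 1 - wtMat G W * (c⁻¹ • (1 - t • arcRevMat G) * (t • tailMat G))
        = R * (c⁻¹ • (1 : Matrix V V ℍ[ℝ])) := by
      rw [hSLX]
      refine Matrix.ext fun u v => ?_
      rw [Matrix.sub_apply, Matrix.sub_apply, mul_smul_one_apply, mul_smul_one_apply,
        mul_smul_one_apply, hRdef, Matrix.add_apply, Matrix.sub_apply, Matrix.of_apply,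
        Matrix.of_apply, Matrix.sub_apply]
      by_cases h : u = v
      · subst h
        rw [Matrix.one_apply_eq]
        refine mul_right_cancel₀ hc ?_
        rw [mul_assoc _ c⁻¹ c, inv_mul_cancel₀ hc, mul_one, sub_mul, one_mul, sub_mul,
          mul_assoc (W u u) (c⁻¹ * t) c, e1,
          mul_assoc (degWeightMat G W u u) (c⁻¹ * (t * t)) c, e2, hcdef]
        noncomm_ring
      · rw [Matrix.one_apply_ne h, degWeightMat, Matrix.diagonal_apply_ne _ h]
        refine mul_right_cancel₀ hc ?_
        rw [mul_assoc _ c⁻¹ c, inv_mul_cancel₀ hc, mul_one, zero_mul, sub_zero, zero_sub,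
          neg_mul, mul_assoc (W u v) (c⁻¹ * t) c, e1, sub_self, zero_mul, add_zero,
          zero_sub]
    have hswap : Sdet (1 - (c⁻¹ • (1 - t • arcRevMat G) * (t • tailMat G)) * wtMat G W)
        = Sdet (1 - wtMat G W * (c⁻¹ • (1 - t • arcRevMat G) * (t • tailMat G))) := by
      rw [Sdet, Sdet, psi_sub, psi_sub, psi_one,
        psi_mul (c⁻¹ • (1 - t • arcRevMat G) * (t • tailMat G)) (wtMat G W),
        psi_mul (wtMat G W) (c⁻¹ • (1 - t • arcRevMat G) * (t • tailMat G)), psi_one]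
      exact Matrix.det_one_sub_mul_comm
        (psi (c⁻¹ • (1 - t • arcRevMat G) * (t • tailMat G))) (psi (wtMat G W))
    have hmain : Sdet (1 - t • (arcWeightMat G W - arcRevMat G))
        = ((‖c‖ ^ Fintype.card G.Dart : ℝ) : ℂ)
          * (Sdet R * ((‖c⁻¹‖ ^ (2 * Fintype.card V) : ℝ) : ℂ)) := by
      rw [hF1, Sdet_mul, hswap, hF2, Sdet_mul, Sdet_smul_one, Sdet_Q, ← hcdef]
    rw [hmain, G.dart_card_eq_twice_card_edges]
    have hn0 : ‖c‖ ≠ 0 := norm_ne_zero_iff.mpr hc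
    have key : ((‖c⁻¹‖ ^ (2 * Fintype.card V) : ℝ) : ℂ)
        * ((‖c‖ ^ (2 * Fintype.card V) : ℝ) : ℂ) = 1 := by
      rw [← Complex.ofReal_mul, norm_inv, inv_pow, inv_mul_cancel₀ (pow_ne_zero _ hn0),
        Complex.ofReal_one]
    linear_combination ((‖c‖ ^ (2 * G.edgeFinset.card) : ℝ) : ℂ) * Sdet R * key
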